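/- The Grams monoid G, the additive submonoid of ℚ≥0 generated by { 1/(2^n · p_n) : n ∈ ℕ }, where p_n is the n-th odd prime, is atomic. -/

import Mathlib

def IsAddAtom {M : Type*} [AddCommMonoid M] (a : M) : Prop :=
  ¬ IsAddUnit a ∧ ∀ x y : M, a = x + y → IsAddUnit x ∨ IsAddUnit y

def AddAtomic (M : Type*) [AddCommMonoid M] : Prop :=
  ∀ x : M, ¬ IsAddUnit x → ∃ l : Multiset M, (∀ a ∈ l, IsAddAtom a) ∧ l.sum = x

/-- The Grams monoid: the additive submonoid of `ℚ` generated by `1 / (2^n * p_n)`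
for `n ≥ 1`, where `p_n = Nat.nth Nat.Prime n` is the `n`-th odd prime
(`Nat.nth Nat.Prime 1 = 3`, `Nat.nth Nat.Prime 2 = 5`, ...). -/
def GramsMonoid : AddSubmonoid ℚ :=
  AddSubmonoid.closure
    {q : ℚ | ∃ n : ℕ, 1 ≤ n ∧ q = 1 / (2 ^ n * (Nat.nth Nat.Prime n : ℚ))}

namespace GramsAux

/-- The generating set of the Grams monoid. -/
def gens : Set ℚ := {q : ℚ | ∃ n : ℕ, 1 ≤ n ∧ q = 1 / (2 ^ n * (Nat.nth Nat.Prime n : ℚ))}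

lemma grams_eq : GramsMonoid = AddSubmonoid.closure gens := rfl

lemma p_prime (n : ℕ) : (Nat.nth Nat.Prime n).Prime := Nat.prime_nth_prime n

lemma p_ne_two {n : ℕ} (hn : 1 ≤ n) : Nat.nth Nat.Prime n ≠ 2 := by
  intro h
  have h2 : Nat.nth Nat.Prime n = Nat.nth Nat.Prime 0 := by
    rw [h, Nat.nth_prime_zero_eq_two]
  have := Nat.nth_injective Nat.infinite_setOf_prime h2
  omega

lemma p_pos (n : ℕ) : 0 < Nat.nth Nat.Prime n := (p_prime n).pos

lemma not_p_dvd {m n : ℕ} (hn : 1 ≤ n) (hmn : m ≠ n) :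
    ¬ Nat.nth Nat.Prime n ∣ 2 ^ m * Nat.nth Nat.Prime m := by
  intro h
  rcases ((p_prime n).dvd_mul).mp h with h | h
  · exact p_ne_two hn
      ((Nat.prime_dvd_prime_iff_eq (p_prime n) Nat.prime_two).mp
        ((p_prime n).dvd_of_dvd_pow h))
  · exact hmn (Nat.nth_injective Nat.infinite_setOf_prime
      ((Nat.prime_dvd_prime_iff_eq (p_prime n) (p_prime m)).mp h)).symm

lemma strictMono_key : StrictMono (fun k => 2 ^ k * Nat.nth Nat.Prime k) := by
  intro a b hab
  have h1 : (2:ℕ) ^ a < 2 ^ b := Nat.pow_lt_pow_right one_lt_two hab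
  have h2 : Nat.nth Nat.Prime a < Nat.nth Nat.Prime b :=
    (Nat.nth_lt_nth Nat.infinite_setOf_prime).mpr hab
  exact Nat.mul_lt_mul_of_lt_of_le h1 h2.le (p_pos b)

lemma gen_pos {q : ℚ} (hq : q ∈ gens) : 0 < q := by
  obtain ⟨n, _, rfl⟩ := hq
  have hp : (0:ℚ) < (Nat.nth Nat.Prime n : ℚ) := by exact_mod_cast p_pos n
  positivity

/-- The set of rationals whose denominator is not divisible by `p_n`, as a submonoid. -/
def noP (n : ℕ) : AddSubmonoid ℚ where
  carrier := {q : ℚ | ¬ (Nat.nth Nat.Prime n ∣ q.den)}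
  zero_mem' := by
    simp only [Set.mem_setOf_eq, Rat.den_ofNat]
    intro h
    exact absurd (Nat.le_of_dvd one_pos h) (by have := (p_prime n).two_le; omega)
  add_mem' := by
    intro a b ha hb h
    have := h.trans (Rat.add_den_dvd a b)
    rcases ((p_prime n).dvd_mul).mp this with h' | h'
    · exact ha h'
    · exact hb h'

lemma den_gen_dvd (m : ℕ) :
    (1 / (2 ^ m * (Nat.nth Nat.Prime m : ℚ))).den ∣ 2 ^ m * Nat.nth Nat.Prime m := by
  have h : (1 / (2 ^ m * (Nat.nth Nat.Prime m : ℚ))) =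
      ((1 : ℤ) : ℚ) / (((2 ^ m * Nat.nth Nat.Prime m : ℕ) : ℤ) : ℚ) := by
    push_cast; ring
  rw [h, ← Rat.divInt_eq_div]
  have := Rat.den_dvd (1 : ℤ) ((2 ^ m * Nat.nth Nat.Prime m : ℕ) : ℤ)
  exact_mod_cast this

lemma gen_mem_noP {n : ℕ} (hn : 1 ≤ n) {q : ℚ} (hq : q ∈ gens)
    (hne : q ≠ 1 / (2 ^ n * (Nat.nth Nat.Prime n : ℚ))) : q ∈ noP n := by
  obtain ⟨m, hm, rfl⟩ := hq
  have hmn : m ≠ n := by rintro rfl; exact hne rfl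
  intro h
  exact not_p_dvd hn hmn (h.trans (den_gen_dvd m))

lemma gen_not_mem_noP {n : ℕ} :
    (1 / (2 ^ n * (Nat.nth Nat.Prime n : ℚ))) ∉ noP n := by
  intro h
  have hpos : 0 < 2 ^ n * Nat.nth Nat.Prime n :=
    Nat.mul_pos (Nat.pow_pos (by norm_num)) (p_pos n)
  have hden : (1 / (2 ^ n * (Nat.nth Nat.Prime n : ℚ))).den = 2 ^ n * Nat.nth Nat.Prime n := by
    have e : (1 / (2 ^ n * (Nat.nth Nat.Prime n : ℚ))) =
        (((2 ^ n * Nat.nth Nat.Prime n : ℕ) : ℚ))⁻¹ := by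
      push_cast; rw [one_div]
    rw [e, Rat.inv_natCast_den_of_pos hpos]
  apply h
  rw [hden]
  exact dvd_mul_left _ _

lemma mem_nonneg {q : ℚ} (h : q ∈ GramsMonoid) : 0 ≤ q := by
  rw [grams_eq] at h
  induction h using AddSubmonoid.closure_induction with
  | mem x hx => exact (gen_pos hx).le
  | zero => exact le_refl 0
  | add x y _ _ hx hy => exact add_nonneg hx hy

lemma isAddUnit_iff_zero (x : GramsMonoid) : IsAddUnit x ↔ x = 0 := by
  constructor
  · rintro ⟨u, rfl⟩
    have h : ((u : GramsMonoid) : ℚ) + (((-u : AddUnits GramsMonoid) : GramsMonoid) : ℚ) = 0 := by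
      rw [← AddSubmonoid.coe_add, u.add_neg, AddSubmonoid.coe_zero]
    have h1 : (0:ℚ) ≤ ((u : GramsMonoid) : ℚ) := mem_nonneg (u : GramsMonoid).2
    have h2 : (0:ℚ) ≤ (((-u : AddUnits GramsMonoid) : GramsMonoid) : ℚ) :=
      mem_nonneg ((-u : AddUnits GramsMonoid) : GramsMonoid).2
    ext
    push_cast
    linarith
  · rintro rfl; exact isAddUnit_zero

lemma gen_atom {n : ℕ} (hn : 1 ≤ n)
    (h : (1 / (2 ^ n * (Nat.nth Nat.Prime n : ℚ))) ∈ GramsMonoid) :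
    IsAddAtom (⟨1 / (2 ^ n * (Nat.nth Nat.Prime n : ℚ)), h⟩ : GramsMonoid) := by
  set a : ℚ := 1 / (2 ^ n * (Nat.nth Nat.Prime n : ℚ)) with hadef
  have ha_pos : 0 < a := gen_pos ⟨n, hn, rfl⟩
  constructor
  · rw [isAddUnit_iff_zero]
    intro h0
    have : a = 0 := congrArg Subtype.val h0
    linarith
  · intro x y hxy
    have hval : a = (x : ℚ) + (y : ℚ) := congrArg Subtype.val hxy
    obtain ⟨lx, hlx, hsx⟩ := AddSubmonoid.exists_multiset_of_mem_closure
      (show (x : ℚ) ∈ AddSubmonoid.closure gens from x.2)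
    obtain ⟨ly, hly, hsy⟩ := AddSubmonoid.exists_multiset_of_mem_closure
      (show (y : ℚ) ∈ AddSubmonoid.closure gens from y.2)
    have hmem : a ∈ lx ∨ a ∈ ly := by
      by_contra hc
      push_neg at hc
      have hsum : (lx + ly).sum ∈ noP n := by
        refine AddSubmonoid.multiset_sum_mem _ _ (fun q hq => ?_)
        rcases Multiset.mem_add.mp hq with hq | hq
        · exact gen_mem_noP hn (hlx q hq) (fun he => hc.1 (by rw [hadef, ← he]; exact hq))
        · exact gen_mem_noP hn (hly q hq) (fun he => hc.2 (by rw [hadef, ← he]; exact hq))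
      rw [Multiset.sum_add, hsx, hsy, ← hval] at hsum
      exact gen_not_mem_noP hsum
    have key : ∀ (l : Multiset ℚ), (∀ q ∈ l, q ∈ gens) → a ∈ l → a ≤ l.sum := by
      intro l hl hal
      exact Multiset.single_le_sum (fun q hq => (gen_pos (hl q hq)).le) a hal
    rcases hmem with hm | hm
    · right
      rw [isAddUnit_iff_zero]
      have hxa : a ≤ (x : ℚ) := hsx ▸ key lx hlx hm
      have hy0 : (0:ℚ) ≤ (y : ℚ) := mem_nonneg y.2
      ext
      simp only [ZeroMemClass.coe_zero]
      linarith
    · left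
      rw [isAddUnit_iff_zero]
      have hya : a ≤ (y : ℚ) := hsy ▸ key ly hly hm
      have hx0 : (0:ℚ) ≤ (x : ℚ) := mem_nonneg x.2
      ext
      simp only [ZeroMemClass.coe_zero]
      linarith

end GramsAux

theorem gramsMonoid_atomic : AddAtomic GramsMonoid := by
  intro x _
  obtain ⟨l, hl, hsum⟩ :=
    AddSubmonoid.exists_multiset_of_mem_closure
      (show (x : ℚ) ∈ AddSubmonoid.closure GramsAux.gens from x.2)
  refine ⟨l.attach.map (fun q =>
    (⟨q.1, AddSubmonoid.subset_closure (hl q.1 q.2)⟩ : GramsMonoid)), ?_, ?_⟩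
  · intro b hb
    obtain ⟨q, _, rfl⟩ := Multiset.mem_map.mp hb
    obtain ⟨n, hn, he⟩ := hl q.1 q.2
    have hmem' : (1 / (2 ^ n * (Nat.nth Nat.Prime n : ℚ))) ∈ GramsMonoid := by
      rw [← he]; exact AddSubmonoid.subset_closure (hl q.1 q.2)
    have heq : (⟨q.1, AddSubmonoid.subset_closure (hl q.1 q.2)⟩ : GramsMonoid) =
        ⟨1 / (2 ^ n * (Nat.nth Nat.Prime n : ℚ)), hmem'⟩ := Subtype.ext he
    rw [heq]
    exact GramsAux.gen_atom hn _
  · apply Subtype.ext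
    rw [AddSubmonoidClass.coe_multiset_sum, Multiset.map_map]
    simpa using hsum
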